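/- arXiv:1303.1545 — 2 statements merged into one kernel-verified Lean document; each statement's English description precedes it below -/
import Mathlib

section
/- The matrix P = [[3-3t, 2-t],[1-2t, 3-3t]] over ℤ[t] cannot be transformed by invertible row and column operations (i.e., multiplication on left and right by invertible matrices over ℤ[t]) into an upper-triangular matrix whose (1,1)-entry is 1, given that det P = 7t² - 13t + 7 is irreducible over ℤ[t]. -/
open Polynomial Matrix

/-- The matrix `[[3-3t, 2-t],[1-2t, 3-3t]]` over ℤ[t] cannot be transformed by
invertible row and column operations into an upper-triangular matrix whose
(1,1)-entry is 1, given that its determinant `7t² - 13t + 7` is irreducible. -/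
theorem stmt_1
    (P : Matrix (Fin 2) (Fin 2) (Polynomial ℤ))
    (hP : P = !![3 - 3 * X, 2 - X; 1 - 2 * X, 3 - 3 * X])
    (hirr : Irreducible ((7 : Polynomial ℤ) * X ^ 2 - 13 * X + 7)) :
    ¬ ∃ U V : Matrix (Fin 2) (Fin 2) (Polynomial ℤ), IsUnit U ∧ IsUnit V ∧
      (U * P * V) 1 0 = 0 ∧ (U * P * V) 0 0 = 1 := by
  rintro ⟨U, V, -, -, -, h1⟩
  -- map everything through the ring hom ℤ[t] → ℤ/3, t ↦ 2
  set f : Polynomial ℤ →+* ZMod 3 := eval₂RingHom (Int.castRingHom (ZMod 3)) 2 with hf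
  have hPmap : P.map f = 0 := by
    ext i j
    fin_cases i <;> fin_cases j <;>
      simp [hP, hf, Matrix.map_apply] <;> decide
  have : ((U * P * V).map f) 0 0 = f ((U * P * V) 0 0) := rfl
  rw [h1, _root_.map_one] at this
  rw [Matrix.map_mul, Matrix.map_mul, hPmap, mul_zero, zero_mul] at this
  simp at this
end

section
/- Let F be a field and let P be an n×n upper-triangular matrix over F[t] with all diagonal entries nonzero, having diagonal entries d₁, …, dₙ. Then the cokernel of P: F[t]ⁿ → F[t]ⁿ is a torsion F[t]-module whose dimension as an F-vector space equals the sum of deg(dᵢ) for i = 1, …, n. -/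
open Polynomial Matrix

private lemma tri_det_ne_zero {F : Type*} [Field F] {m : ℕ}
    (P : Matrix (Fin m) (Fin m) (Polynomial F))
    (htri : ∀ i j : Fin m, j < i → P i j = 0)
    (hdiag : ∀ i : Fin m, P i i ≠ 0) : P.det ≠ 0 := by
  rw [Matrix.det_of_upperTriangular (fun i j h => htri i j h)]
  exact Finset.prod_ne_zero_iff.mpr fun i _ => hdiag i

private lemma tri_mulVec_inj {F : Type*} [Field F] {m : ℕ}
    (P : Matrix (Fin m) (Fin m) (Polynomial F))
    (htri : ∀ i j : Fin m, j < i → P i j = 0)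
    (hdiag : ∀ i : Fin m, P i i ≠ 0)
    {x : Fin m → Polynomial F} (hx : P.mulVec x = 0) : x = 0 := by
  have hdet := tri_det_ne_zero P htri hdiag
  have h2 : P.det • x = 0 := by
    have h := congrArg (P.adjugate.mulVec) hx
    rwa [Matrix.mulVec_mulVec, Matrix.adjugate_mul, Matrix.smul_mulVec,
      Matrix.one_mulVec, Matrix.mulVec_zero] at h
  funext j
  have h := congrFun h2 j
  simp only [Pi.smul_apply, smul_eq_mul, Pi.zero_apply, mul_eq_zero] at h
  exact h.resolve_left hdet

set_option maxHeartbeats 2000000 in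
private theorem aux_dim {F : Type*} [Field F] : ∀ (n : ℕ)
    (P : Matrix (Fin n) (Fin n) (Polynomial F))
    (_ : ∀ i j : Fin n, j < i → P i j = 0)
    (_ : ∀ i : Fin n, P i i ≠ 0),
    FiniteDimensional F ((Fin n → Polynomial F) ⧸ LinearMap.range P.mulVecLin) ∧
      Module.finrank F ((Fin n → Polynomial F) ⧸ LinearMap.range P.mulVecLin) =
        ∑ i : Fin n, (P i i).natDegree := by
  intro n
  induction n with
  | zero =>
    intro P _ _
    haveI : Subsingleton ((Fin 0 → Polynomial F) ⧸ LinearMap.range P.mulVecLin) := by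
      constructor
      intro a b
      obtain ⟨a, rfl⟩ := Submodule.Quotient.mk_surjective _ a
      obtain ⟨b, rfl⟩ := Submodule.Quotient.mk_surjective _ b
      congr 1
      exact Subsingleton.elim _ _
    refine ⟨Module.Finite.of_surjective (0 : F →ₗ[F] _) (fun x => ⟨0, Subsingleton.elim _ _⟩), ?_⟩
    simp [Module.finrank_zero_of_subsingleton]
  | succ n IH =>
    intro P htri hdiag
    set d0 : Polynomial F := P 0 0 with hd0
    let P' : Matrix (Fin n) (Fin n) (Polynomial F) := Matrix.of fun i j => P i.succ j.succ
    have htri' : ∀ i j : Fin n, j < i → P' i j = 0 :=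
      fun i j h => htri _ _ (Fin.succ_lt_succ_iff.mpr h)
    have hdiag' : ∀ i : Fin n, P' i i ≠ 0 := fun i => hdiag i.succ
    obtain ⟨ihFD, ihrank⟩ := IH P' htri' hdiag'
    let q : (Fin (n+1) → Polynomial F) →ₗ[Polynomial F] (Fin n → Polynomial F) :=
      LinearMap.funLeft _ _ Fin.succ
    have key : ∀ x, q (P.mulVecLin x) = P'.mulVecLin (x ∘ Fin.succ) := by
      intro x; funext i
      have h0 : P i.succ 0 = 0 := htri _ _ (Fin.succ_pos i)
      simp only [q, LinearMap.funLeft_apply, Matrix.mulVecLin_apply, Matrix.mulVec,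
        dotProduct, Matrix.of_apply, P']
      rw [Fin.sum_univ_succ, h0, zero_mul, zero_add]
      rfl
    have hle : LinearMap.range P.mulVecLin ≤ (LinearMap.range P'.mulVecLin).comap q := by
      rintro _ ⟨x, rfl⟩
      exact ⟨x ∘ Fin.succ, (key x).symm⟩
    set qbar : ((Fin (n+1) → Polynomial F) ⧸ LinearMap.range P.mulVecLin) →ₗ[Polynomial F]
        ((Fin n → Polynomial F) ⧸ LinearMap.range P'.mulVecLin) :=
      Submodule.mapQ _ _ q hle with hqbar
    have hqsurj : Function.Surjective qbar := by
      intro y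
      obtain ⟨w, rfl⟩ := Submodule.Quotient.mk_surjective _ y
      refine ⟨Submodule.Quotient.mk (Fin.cons 0 w), ?_⟩
      rw [hqbar, Submodule.mapQ_apply]
      rfl
    set φ : Polynomial F →ₗ[Polynomial F]
        ((Fin (n+1) → Polynomial F) ⧸ LinearMap.range P.mulVecLin) :=
      (LinearMap.range P.mulVecLin).mkQ.comp
        (LinearMap.single (R := Polynomial F) (φ := fun _ : Fin (n+1) => Polynomial F) 0) with hφ
    have hφ_apply : ∀ p, φ p = Submodule.Quotient.mk ((Pi.single (0 : Fin (n+1)) p : Fin (n+1) → Polynomial F)) := fun p => rfl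
    have hqzero : ∀ p : Polynomial F, q (Pi.single 0 p) = 0 := by
      intro p; funext i
      simp [q, LinearMap.funLeft_apply, Pi.single_eq_of_ne (Fin.succ_ne_zero i)]
    have hker : LinearMap.ker qbar = LinearMap.range φ := by
      ext v
      constructor
      · intro hv
        obtain ⟨v, rfl⟩ := Submodule.Quotient.mk_surjective _ v
        rw [LinearMap.mem_ker, hqbar, Submodule.mapQ_apply, Submodule.Quotient.mk_eq_zero] at hv
        obtain ⟨y, hy⟩ := hv
        set w : Fin (n+1) → Polynomial F := v - P.mulVecLin (Fin.cons 0 y) with hw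
        have hq2 : q (P.mulVecLin (Fin.cons 0 y)) = P'.mulVecLin y := by
          rw [key]
          congr 1
        have hwsucc : ∀ i : Fin n, w i.succ = 0 := by
          intro i
          have h1 : v i.succ = P'.mulVecLin y i := congrFun hy.symm i
          have h2 : P.mulVecLin (Fin.cons 0 y) i.succ = P'.mulVecLin y i := congrFun hq2 i
          have h3 : w i.succ = v i.succ - P.mulVecLin (Fin.cons 0 y) i.succ := rfl
          rw [h3, h1, h2, sub_self]
        have hsingle : w = (Pi.single (0 : Fin (n+1)) (w 0) : Fin (n+1) → Polynomial F) := by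
          funext i
          refine Fin.cases ?_ ?_ i
          · simp
          · intro j
            rw [hwsucc j, Pi.single_eq_of_ne (Fin.succ_ne_zero j)]
        refine ⟨w 0, ?_⟩
        rw [hφ_apply, ← hsingle, hw]
        rw [Submodule.Quotient.eq]
        simp only [sub_sub_cancel_left]
        exact Submodule.neg_mem _ ⟨Fin.cons 0 y, rfl⟩
      · rintro ⟨p, rfl⟩
        rw [LinearMap.mem_ker, hφ_apply, hqbar, Submodule.mapQ_apply,
          Submodule.Quotient.mk_eq_zero, hqzero]
        exact zero_mem _
    have hkerφ : LinearMap.ker φ = Ideal.span {d0} := by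
      ext p
      rw [LinearMap.mem_ker, hφ_apply, Submodule.Quotient.mk_eq_zero, Ideal.mem_span_singleton]
      constructor
      · rintro ⟨x, hx⟩
        have htail : x ∘ Fin.succ = 0 := by
          apply tri_mulVec_inj P' htri' hdiag'
          have h1 : q (P.mulVecLin x) = 0 := by rw [hx]; exact hqzero p
          rw [key] at h1
          exact h1
        refine ⟨x 0, ?_⟩
        have h0 := congrFun hx 0
        rw [Matrix.mulVecLin_apply, Pi.single_eq_same] at h0
        rw [← h0]
        show Matrix.mulVec P x 0 = d0 * x 0
        rw [Matrix.mulVec, dotProduct, Fin.sum_univ_succ]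
        have : ∀ j : Fin n, P 0 j.succ * x j.succ = 0 := by
          intro j
          have : x j.succ = 0 := congrFun htail j
          rw [this, mul_zero]
        rw [Finset.sum_congr rfl fun j _ => this j]
        simp [hd0]
      · rintro ⟨c, rfl⟩
        refine ⟨(Pi.single (0 : Fin (n+1)) c : Fin (n+1) → Polynomial F), ?_⟩
        rw [Matrix.mulVecLin_apply, Matrix.mulVec_single]
        funext i
        simp only [Pi.smul_apply, Matrix.col_apply, op_smul_eq_mul]
        refine Fin.cases ?_ ?_ i
        · simp [hd0]
        · intro j
          rw [htri _ _ (Fin.succ_pos j), zero_mul, Pi.single_eq_of_ne (Fin.succ_ne_zero j)]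
    -- dimension of K := range φ
    have e2 : (Polynomial F ⧸ (Ideal.span {d0} : Ideal (Polynomial F))) ≃ₗ[Polynomial F] LinearMap.range φ := by
      rw [← hkerφ]
      exact φ.quotKerEquivRange
    have hKrank : Module.finrank F (LinearMap.range φ) = d0.natDegree := by
      rw [← (e2.restrictScalars F).finrank_eq]
      exact (AdjoinRoot.powerBasis (hdiag 0)).finrank
    haveI hKfd : FiniteDimensional F (LinearMap.range φ) := by
      haveI : FiniteDimensional F (Polynomial F ⧸ (Ideal.span {d0} : Ideal (Polynomial F))) :=
        Module.Finite.of_basis (AdjoinRoot.powerBasis (hdiag 0)).basis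
      exact Module.Finite.equiv (e2.restrictScalars F)
    -- quotient by K
    have e4 : (((Fin (n+1) → Polynomial F) ⧸ LinearMap.range P.mulVecLin) ⧸ LinearMap.ker qbar)
        ≃ₗ[Polynomial F] ((Fin n → Polynomial F) ⧸ LinearMap.range P'.mulVecLin) :=
      qbar.quotKerEquivOfSurjective hqsurj
    rw [hker] at e4
    have hQrank : Module.finrank F
        (((Fin (n+1) → Polynomial F) ⧸ LinearMap.range P.mulVecLin) ⧸ LinearMap.range φ)
        = ∑ i : Fin n, (P' i i).natDegree := by
      rw [(e4.restrictScalars F).finrank_eq, ihrank]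
    haveI hQfd : FiniteDimensional F
        (((Fin (n+1) → Polynomial F) ⧸ LinearMap.range P.mulVecLin) ⧸ LinearMap.range φ) :=
      Module.Finite.equiv (e4.restrictScalars F).symm
    haveI hfd : FiniteDimensional F
        ((Fin (n+1) → Polynomial F) ⧸ LinearMap.range P.mulVecLin) := by
      apply IsNoetherian.iff_fg.mp
      apply (isNoetherian_iff_submodule_quotient ((LinearMap.range φ).restrictScalars F)).mpr
      haveI h1 : Module.Finite F
          ((((Fin (n+1) → Polynomial F) ⧸ LinearMap.range P.mulVecLin)) ⧸
            (LinearMap.range φ).restrictScalars F) :=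
        Module.Finite.equiv (Submodule.Quotient.restrictScalarsEquiv F (LinearMap.range φ)).symm
      haveI h2 : Module.Finite F ((LinearMap.range φ).restrictScalars F) :=
        Module.Finite.equiv ((Submodule.restrictScalarsEquiv F (Polynomial F) _ (LinearMap.range φ)).restrictScalars F).symm
      exact ⟨IsNoetherian.iff_fg.mpr h2, IsNoetherian.iff_fg.mpr h1⟩
    refine ⟨hfd, ?_⟩
    have h5 := ((LinearMap.range φ).restrictScalars F).finrank_quotient_add_finrank
    have h6 : Module.finrank F
        ((((Fin (n+1) → Polynomial F) ⧸ LinearMap.range P.mulVecLin)) ⧸ (LinearMap.range φ).restrictScalars F)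
        = ∑ i : Fin n, (P' i i).natDegree := by
      rw [(Submodule.Quotient.restrictScalarsEquiv F (LinearMap.range φ)).finrank_eq]
      exact hQrank
    have h7 : Module.finrank F ((LinearMap.range φ).restrictScalars F) = d0.natDegree := by
      rw [((Submodule.restrictScalarsEquiv F (Polynomial F) _ (LinearMap.range φ)).restrictScalars F).finrank_eq]
      exact hKrank
    rw [h6, h7] at h5
    rw [← h5, Fin.sum_univ_succ]
    exact add_comm _ _

/-- For an n×n upper-triangular matrix over F[t] with nonzero diagonal entries,
the cokernel is a torsion F[t]-module whose F-dimension is the sum of the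
degrees of the diagonal entries. -/
theorem stmt_4 {F : Type*} [Field F] (n : ℕ)
    (P : Matrix (Fin n) (Fin n) (Polynomial F))
    (htri : ∀ i j : Fin n, j < i → P i j = 0)
    (hdiag : ∀ i : Fin n, P i i ≠ 0) :
    Module.IsTorsion (Polynomial F)
        ((Fin n → Polynomial F) ⧸ LinearMap.range P.mulVecLin) ∧
      Module.finrank F ((Fin n → Polynomial F) ⧸ LinearMap.range P.mulVecLin) =
        ∑ i : Fin n, (P i i).natDegree := by
  obtain ⟨_, hrank⟩ := aux_dim n P htri hdiag
  refine ⟨?_, hrank⟩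
  intro x
  obtain ⟨v, rfl⟩ := Submodule.Quotient.mk_surjective _ x
  refine ⟨⟨P.det, mem_nonZeroDivisors_of_ne_zero (tri_det_ne_zero P htri hdiag)⟩, ?_⟩
  rw [Submonoid.smul_def]
  rw [← Submodule.Quotient.mk_smul, Submodule.Quotient.mk_eq_zero]
  refine ⟨P.adjugate.mulVec v, ?_⟩
  rw [Matrix.mulVecLin_apply, Matrix.mulVec_mulVec, Matrix.mul_adjugate,
    Matrix.smul_mulVec, Matrix.one_mulVec]
end
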